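/- For w ∈ (0, π), the series ∑_{ℓ=1}^∞ (2ℓ+1)/(ℓ(ℓ+1)) · sin((2ℓ+1)w/2)/sin(w/2) converges and equals (π − w)·cot(w/2) − 1. -/

import Mathlib

open Real Filter

lemma sawtooth {w : ℝ} (hw : w ∈ Set.Ioo 0 π) :
    Tendsto (fun N : ℕ => ∑ k ∈ Finset.Icc 1 N, Real.sin (k * w) / k) atTop
      (nhds ((π - w) / 2)) := by
  obtain ⟨hw0, hwπ⟩ := hw
  set z : ℂ := Complex.exp (w * Complex.I) with hzdef
  have hznorm : ‖z‖ = 1 := Complex.norm_exp_ofReal_mul_I w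
  have hcos : Real.cos w < 1 := by
    have := Real.cos_lt_cos_of_nonneg_of_le_pi le_rfl hwπ.le hw0
    simpa using this
  have hre : (1 - z).re = 1 - Real.cos w := by
    simp [hzdef, Complex.exp_ofReal_mul_I_re]
  have hz1 : z ≠ 1 := by
    intro h
    rw [h] at hre
    simp at hre
    linarith
  set f : ℕ → ℂ := fun n => z ^ n / n with hfdef
  set s : ℕ → ℂ := fun n => ∑ i ∈ Finset.range n, f i with hsdef
  -- Cauchy sequence via Dirichlet's test
  have hbound : ∀ n : ℕ, ‖∑ i ∈ Finset.range n, z ^ (i + 1)‖ ≤ 2 / ‖1 - z‖ := by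
    intro n
    have hsum : ∑ i ∈ Finset.range n, z ^ (i + 1) = z * ((z ^ n - 1) / (z - 1)) := by
      rw [← geom_sum_eq hz1 n, Finset.mul_sum]
      exact Finset.sum_congr rfl fun i _ => by ring
    rw [hsum, norm_mul, hznorm, one_mul, norm_div]
    rw [norm_sub_rev (1 : ℂ) z]
    have hpos : 0 < ‖z - 1‖ := norm_pos_iff.mpr (sub_ne_zero.mpr hz1)
    have h2 : ‖z ^ n - 1‖ ≤ 2 := by
      calc ‖z ^ n - 1‖ ≤ ‖z ^ n‖ + ‖(1 : ℂ)‖ := norm_sub_le _ _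
        _ = 2 := by rw [norm_pow, hznorm]; norm_num
    exact (div_le_div_iff_of_pos_right hpos).mpr h2
  have hz1' : (1 : ℂ) - z ≠ 0 := by
    intro h
    apply hz1
    linear_combination -h
  have hCs : CauchySeq s := by
    rw [← cauchySeq_shift 1]
    have key : (fun n => s (n + 1)) =
        fun n => ∑ i ∈ Finset.range n, ((1 : ℝ) / (i + 1)) • z ^ (i + 1) := by
      funext n
      rw [hsdef]
      simp only
      rw [Finset.sum_range_succ' f n]
      have : f 0 = 0 := by simp [hfdef]
      rw [this, add_zero]
      refine Finset.sum_congr rfl fun i _ => ?_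
      simp only [hfdef]
      push_cast
      rw [Complex.real_smul]
      push_cast
      ring
    rw [key]
    exact Antitone.cauchySeq_series_mul_of_tendsto_zero_of_bounded
      (fun i j hij => by
        apply div_le_div_of_nonneg_left zero_le_one (by positivity) (by exact_mod_cast by omega)
        )
      tendsto_one_div_add_atTop_nhds_zero_nat hbound
  obtain ⟨l, hl⟩ := cauchySeq_tendsto_of_complete hCs
  -- Abel's limit theorem
  have habel := Complex.tendsto_tsum_powerSeries_nhdsWithin_lt hl
  rw [tendsto_map'_iff] at habel
  -- identify the limit
  have heq : ∀ r ∈ Set.Ioo (0 : ℝ) 1,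
      ∑' n, f n * (r : ℂ) ^ n = -Complex.log (1 - r * z) := by
    intro r hr
    have hn : ‖(r : ℂ) * z‖ < 1 := by
      rw [norm_mul, hznorm, mul_one, Complex.norm_real, Real.norm_eq_abs,
        abs_of_pos hr.1]
      exact hr.2
    have h := Complex.hasSum_taylorSeries_neg_log hn
    rw [← h.tsum_eq]
    congr 1
    funext n
    simp only [hfdef]
    rw [mul_pow]
    ring
  have hslit : (1 : ℂ) - z ∈ Complex.slitPlane := by
    rw [Complex.mem_slitPlane_iff]
    left; rw [hre]; linarith
  have hcont : Tendsto (fun r : ℝ => -Complex.log (1 - (r : ℂ) * z)) (nhdsWithin 1 (Set.Iio 1))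
      (nhds (-Complex.log (1 - z))) := by
    have hinner : ContinuousAt (fun r : ℝ => 1 - (r : ℂ) * z) 1 := by fun_prop
    have hc : ContinuousAt (fun r : ℝ => -Complex.log (1 - (r : ℂ) * z)) 1 :=
      (hinner.clog (by simpa using hslit)).neg
    have hc' : Tendsto (fun r : ℝ => -Complex.log (1 - (r : ℂ) * z)) (nhds 1)
        (nhds (-Complex.log (1 - z))) := by simpa using hc.tendsto
    exact hc'.mono_left nhdsWithin_le_nhds
  have hmemIoo : Set.Ioo (0 : ℝ) 1 ∈ nhdsWithin (1 : ℝ) (Set.Iio 1) :=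
    Ioo_mem_nhdsLT_of_mem (by constructor <;> norm_num)
  have hlval : l = -Complex.log (1 - z) := by
    refine tendsto_nhds_unique (habel.congr' ?_) hcont
    filter_upwards [hmemIoo] with r hr
    exact heq r hr
  -- compute the imaginary part of the limit
  have hsinhalf : 0 < Real.sin (w / 2) :=
    Real.sin_pos_of_pos_of_lt_pi (by linarith) (by linarith [Real.pi_pos])
  have harg : (1 - z).arg = (w - π) / 2 := by
    have hdecomp : (1 : ℂ) - z =
        (2 * Real.sin (w / 2) : ℝ) * (Complex.cos ((w - π) / 2 : ℝ) +
          Complex.sin ((w - π) / 2 : ℝ) * Complex.I) := by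
      apply Complex.ext
      · simp only [Complex.sub_re, Complex.one_re, hzdef, Complex.exp_ofReal_mul_I_re,
          Complex.mul_re, Complex.ofReal_re, Complex.ofReal_im, Complex.add_re,
          Complex.cos_ofReal_re, Complex.mul_im, Complex.add_im, Complex.I_re, Complex.I_im,
          Complex.sin_ofReal_re, Complex.sin_ofReal_im, Complex.cos_ofReal_im]
        have h1 : Real.cos ((w - π) / 2) = Real.sin (w / 2) := by
          rw [show (w - π) / 2 = -(π / 2 - w / 2) by ring, Real.cos_neg,
            Real.cos_pi_div_two_sub]
        have h2 : Real.cos w = 1 - 2 * Real.sin (w / 2) ^ 2 := by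
          have hc2 : Real.cos w = Real.cos (2 * (w / 2)) := by congr 1; ring
          rw [hc2, Real.cos_two_mul]
          nlinarith [Real.sin_sq_add_cos_sq (w / 2)]
        rw [h1, h2]
        ring
      · simp only [Complex.sub_im, Complex.one_im, hzdef, Complex.exp_ofReal_mul_I_im,
          Complex.mul_im, Complex.ofReal_re, Complex.ofReal_im, Complex.add_im,
          Complex.cos_ofReal_im, Complex.mul_re, Complex.add_re, Complex.I_re, Complex.I_im,
          Complex.sin_ofReal_re, Complex.sin_ofReal_im, Complex.cos_ofReal_re]
        have h1 : Real.sin ((w - π) / 2) = -Real.cos (w / 2) := by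
          rw [show (w - π) / 2 = -(π / 2 - w / 2) by ring, Real.sin_neg,
            Real.sin_pi_div_two_sub]
        have h2 : Real.sin w = 2 * Real.sin (w / 2) * Real.cos (w / 2) := by
          have hc2 : Real.sin w = Real.sin (2 * (w / 2)) := by congr 1; ring
          rw [hc2, Real.sin_two_mul]
        rw [h1, h2]
        ring
    rw [hdecomp, Complex.arg_real_mul _ (by positivity),
      Complex.arg_cos_add_sin_mul_I]
    constructor
    · linarith [Real.pi_pos]
    · linarith [Real.pi_pos]
  have hlim : l.im = (π - w) / 2 := by
    rw [hlval, Complex.neg_im, Complex.log_im, harg]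
    ring
  -- pass to imaginary parts of partial sums
  have him : Tendsto (fun n => (s n).im) atTop (nhds ((π - w) / 2)) := by
    rw [← hlim]
    exact (Complex.continuous_im.tendsto l).comp hl
  have hsim : ∀ N : ℕ, (s (N + 1)).im = ∑ k ∈ Finset.Icc 1 N, Real.sin (k * w) / k := by
    intro N
    induction N with
    | zero => simp [hsdef, hfdef]
    | succ n ih =>
      rw [hsdef]
      simp only
      rw [Finset.sum_range_succ, Complex.add_im]
      rw [hsdef] at ih
      simp only at ih
      rw [ih, Finset.sum_Icc_succ_top (by omega)]
      congr 1
      simp only [hfdef]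
      have : (((n : ℕ) + 1 : ℕ) : ℂ) = (((n + 1 : ℕ) : ℝ) : ℂ) := by push_cast; ring
      rw [this, Complex.div_ofReal_im]
      congr 1
      have hzp : z ^ (n + 1 : ℕ) = Complex.exp ((((n + 1 : ℕ) : ℝ) * w : ℝ) * Complex.I) := by
        rw [hzdef, ← Complex.exp_nat_mul]
        congr 1
        push_cast
        ring
      rw [hzp, Complex.exp_ofReal_mul_I_im]
  have := him.comp (tendsto_add_atTop_nat 1)
  refine this.congr fun N => ?_
  exact hsim N

lemma green_identity (w : ℝ) : ∀ N : ℕ,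
    ∑ ℓ ∈ Finset.Icc 1 N, (2 * (ℓ : ℝ) + 1) / (ℓ * (ℓ + 1)) * Real.sin ((2 * ℓ + 1) * w / 2)
      = 2 * Real.cos (w / 2) * (∑ k ∈ Finset.Icc 1 N, Real.sin (k * w) / k)
        - Real.sin (w / 2) + Real.sin ((2 * N + 1) * w / 2) / (N + 1) := by
  intro N
  induction N with
  | zero => norm_num
  | succ n ih =>
    rw [Finset.sum_Icc_succ_top (by omega), Finset.sum_Icc_succ_top (by omega), ih]
    have hn1 : ((n : ℝ) + 1) ≠ 0 := by positivity
    have hn2 : ((n : ℝ) + 2) ≠ 0 := by positivity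
    have e1 : (2 * ((n : ℕ) + 1 : ℕ) + 1 : ℝ) * w / 2 = ((n : ℝ) + 1) * w + w / 2 := by
      push_cast; ring
    have e2 : (2 * (n : ℝ) + 1) * w / 2 = ((n : ℝ) + 1) * w - w / 2 := by ring
    have e3 : (((n : ℕ) + 1 : ℕ) : ℝ) * w = ((n : ℝ) + 1) * w := by push_cast; ring
    push_cast
    rw [show (2 * ((n : ℝ) + 1) + 1) * w / 2 = ((n : ℝ) + 1) * w + w / 2 by ring,
      show (2 * (n : ℝ) + 1) * w / 2 = ((n : ℝ) + 1) * w - w / 2 by ring,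
      Real.sin_add, Real.sin_sub]
    field_simp
    ring

theorem green_series_eq (w : ℝ) (hw : w ∈ Set.Ioo 0 π) :
    Tendsto (fun N : ℕ => ∑ ℓ ∈ Finset.Icc 1 N,
        (2 * (ℓ : ℝ) + 1) / (ℓ * (ℓ + 1)) * (Real.sin ((2 * ℓ + 1) * w / 2) / Real.sin (w / 2)))
      atTop (nhds ((π - w) * Real.cot (w / 2) - 1)) := by
  obtain ⟨hw0, hwπ⟩ := hw
  have hsinhalf : 0 < Real.sin (w / 2) :=
    Real.sin_pos_of_pos_of_lt_pi (by linarith) (by linarith [Real.pi_pos])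
  have herr : Tendsto (fun N : ℕ => Real.sin ((2 * N + 1) * w / 2) / (N + 1)) atTop (nhds 0) := by
    apply squeeze_zero_norm (a := fun N : ℕ => 1 / ((N : ℝ) + 1))
      _ tendsto_one_div_add_atTop_nhds_zero_nat
    intro n
    rw [Real.norm_eq_abs, abs_div, abs_of_pos (by positivity : (0:ℝ) < (n : ℝ) + 1)]
    exact (div_le_div_iff_of_pos_right (by positivity)).mpr (Real.abs_sin_le_one _)
  have hB : Tendsto (fun N : ℕ => ∑ ℓ ∈ Finset.Icc 1 N,
      (2 * (ℓ : ℝ) + 1) / (ℓ * (ℓ + 1)) * Real.sin ((2 * ℓ + 1) * w / 2)) atTop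
      (nhds (2 * Real.cos (w / 2) * ((π - w) / 2) - Real.sin (w / 2) + 0)) := by
    have h1 := ((sawtooth ⟨hw0, hwπ⟩).const_mul (2 * Real.cos (w / 2))).sub_const
      (Real.sin (w / 2))
    have h2 := h1.add herr
    refine h2.congr fun N => ?_
    exact (green_identity w N).symm
  have hfinal : Tendsto (fun N : ℕ => (∑ ℓ ∈ Finset.Icc 1 N,
      (2 * (ℓ : ℝ) + 1) / (ℓ * (ℓ + 1)) * Real.sin ((2 * ℓ + 1) * w / 2)) / Real.sin (w / 2))
      atTop (nhds ((2 * Real.cos (w / 2) * ((π - w) / 2) - Real.sin (w / 2) + 0) /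
        Real.sin (w / 2))) := hB.div_const _
  have hval : (2 * Real.cos (w / 2) * ((π - w) / 2) - Real.sin (w / 2) + 0) / Real.sin (w / 2)
      = (π - w) * Real.cot (w / 2) - 1 := by
    rw [Real.cot_eq_cos_div_sin]
    field_simp
    ring
  rw [hval] at hfinal
  refine hfinal.congr fun N => ?_
  rw [Finset.sum_div]
  exact Finset.sum_congr rfl fun ℓ _ => by rw [mul_div_assoc]
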